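/- Let d ≥ 2 and let a : ℤ^d → ℤ^d be a random function on a probability space such that x and a(x) are always nearest neighbors, the graph with edge set {{x, a(x)} : x ∈ ℤ^d} has no cycles, and the collection (a(x) − x)_{x ∈ ℤ^d} is stationary under lattice translations. Define h(x) = sup{n ≥ 0 : x = aⁿ(y) for some y ∈ ℤ^d}. Then there is a constant c₁ > 0 depending only on d such that liminf_{n→∞} n^{d−1} ℙ[h(0) ≥ n] ≥ c₁. -/

import Mathlib

open MeasureTheory Filter
open scoped ENNReal

namespace BZZaux
variable {d : ℕ}

def walk (b : (Fin d → ℤ) → (Fin d → ℤ)) : (Fin d → ℤ) → (Fin d → ℤ) := fun x => x + b x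

lemma meas_walk_set (m : ℕ) (y t : Fin d → ℤ) :
    MeasurableSet {b : (Fin d → ℤ) → (Fin d → ℤ) | (walk b)^[m] y = t} := by
  induction m generalizing y with
  | zero =>
    simp only [Function.iterate_zero, id_eq]
    by_cases h : y = t
    · simp [h]
    · convert MeasurableSet.empty (α := (Fin d → ℤ) → (Fin d → ℤ))
      ext b; simp [h]
  | succ m ih =>
    have heq : {b : (Fin d → ℤ) → (Fin d → ℤ) | (walk b)^[m+1] y = t}
        = ⋃ v : Fin d → ℤ, ({b | b y = v - y} ∩ {b | (walk b)^[m] v = t}) := by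
      ext b
      simp only [Set.mem_setOf_eq, Set.mem_iUnion, Set.mem_inter_iff,
        Function.iterate_succ_apply]
      constructor
      · intro h
        refine ⟨walk b y, by simp [walk], h⟩
      · rintro ⟨v, hv, h2⟩
        have : walk b y = v := by simp [walk, hv]
        rwa [this]
    rw [heq]
    refine MeasurableSet.iUnion fun v => MeasurableSet.inter ?_ (ih v)
    have : {b : (Fin d → ℤ) → (Fin d → ℤ) | b y = v - y}
        = (fun b : (Fin d → ℤ) → (Fin d → ℤ) => b y) ⁻¹' {v - y} := rfl
    rw [this]
    exact (measurable_pi_apply y) (MeasurableSet.singleton (v - y))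

lemma walk_shift (A : (Fin d → ℤ) → Fin d → ℤ) (z : Fin d → ℤ) (m : ℕ) (y : Fin d → ℤ) :
    (walk (fun u => A (u + z) - (u + z)))^[m] y = A^[m] (y + z) - z := by
  induction m generalizing y with
  | zero => simp
  | succ m ih =>
    rw [Function.iterate_succ_apply', ih, Function.iterate_succ_apply']
    set w := A^[m] (y + z)
    show (w - z) + (A ((w - z) + z) - ((w - z) + z)) = A w - z
    rw [sub_add_cancel]
    abel

lemma sup_ge_iff (n : ℕ) (hn : 1 ≤ n) (P : ℕ → Prop) :
    (n : ℕ∞) ≤ ⨆ (m : ℕ) (_ : P m), (m : ℕ∞) ↔ ∃ m, n ≤ m ∧ P m := by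
  constructor
  · intro h
    by_contra hc
    push_neg at hc
    have hb : ⨆ (m : ℕ) (_ : P m), (m : ℕ∞) ≤ ((n - 1 : ℕ) : ℕ∞) := by
      refine iSup₂_le fun m hm => ?_
      have : m ≤ n - 1 := by
        by_contra hm'
        exact hc m (by omega) hm
      exact_mod_cast this
    have h2 := h.trans hb
    have : n ≤ n - 1 := by exact_mod_cast h2
    omega
  · rintro ⟨m, h1, h2⟩
    exact le_trans (by exact_mod_cast h1) (le_iSup₂ (f := fun m (_ : P m) => (m : ℕ∞)) m h2)

lemma l1_bound (A : (Fin d → ℤ) → Fin d → ℤ) (h1 : ∀ x, ∑ i, |A x i - x i| = 1)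
    (k : ℕ) (x : Fin d → ℤ) : ∑ i, |A^[k] x i - x i| ≤ (k : ℤ) := by
  induction k with
  | zero => simp
  | succ k ih =>
    rw [Function.iterate_succ_apply']
    set y := A^[k] x
    calc ∑ i, |A y i - x i| ≤ ∑ i, (|A y i - y i| + |y i - x i|) := by
          refine Finset.sum_le_sum fun i _ => ?_
          have := abs_sub_le (A y i) (y i) (x i)
          simpa using this
      _ = (∑ i, |A y i - y i|) + ∑ i, |y i - x i| := Finset.sum_add_distrib
      _ ≤ 1 + k := by rw [h1 y]; exact add_le_add_right ih 1
      _ = (k + 1 : ℕ) := by push_cast; ring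

end BZZaux

/-- Theorem 1 of Bramson–Zeitouni–Zerner: there is `c₁ > 0` depending only on `d ≥ 2` such
that for every stationary ancestral function `a` on `ℤ^d`,
`liminf_{n} n^(d-1) ℙ[h(0) ≥ n] ≥ c₁`, where `h(x) = sup{n : x = aⁿ(y) for some y}`. -/
theorem stmt2 (d : ℕ) (hd : 2 ≤ d) :
    ∃ c : ℝ≥0∞, 0 < c ∧
      ∀ (Ω : Type) [MeasurableSpace Ω] (ℙ : Measure Ω) [IsProbabilityMeasure ℙ]
        (a : Ω → (Fin d → ℤ) → (Fin d → ℤ)),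
        (∀ ω x, ∑ i, |a ω x i - x i| = 1) →
        (∀ (ω : Ω) (x : Fin d → ℤ) (n : ℕ), 1 ≤ n → (a ω)^[n] x ≠ x) →
        (∀ z : Fin d → ℤ,
          Measurable (fun ω => fun x => a ω (x + z) - (x + z)) ∧
          Measure.map (fun ω => fun x => a ω (x + z) - (x + z)) ℙ =
            Measure.map (fun ω => fun x => a ω x - x) ℙ) →
        c ≤ liminf (fun n : ℕ =>
          (n : ℝ≥0∞) ^ (d - 1) *
            ℙ {ω | (n : ℕ∞) ≤ ⨆ (m : ℕ) (_ : ∃ y, (a ω)^[m] y = 0), (m : ℕ∞)}) atTop := by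
  refine ⟨((5 : ℝ≥0∞) ^ d)⁻¹, ?_, ?_⟩
  · exact ENNReal.inv_pos.mpr (ENNReal.pow_ne_top (by norm_num))
  intro Ω _ ℙ _ a h1 hcyc hstat
  -- the shifted-field events
  set S : ℕ → Set ((Fin d → ℤ) → (Fin d → ℤ)) := fun n =>
    {b | (n : ℕ∞) ≤ ⨆ (m : ℕ) (_ : ∃ y, (BZZaux.walk b)^[m] y = 0), (m : ℕ∞)} with hS
  set E : (Fin d → ℤ) → ℕ → Set Ω := fun z n =>
    {ω | (n : ℕ∞) ≤ ⨆ (m : ℕ) (_ : ∃ y, (a ω)^[m] y = z), (m : ℕ∞)} with hE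
  set F : (Fin d → ℤ) → Ω → ((Fin d → ℤ) → (Fin d → ℤ)) := fun z ω =>
    fun u => a ω (u + z) - (u + z) with hF
  have hSmeas : ∀ n : ℕ, 1 ≤ n → MeasurableSet (S n) := by
    intro n hn
    have : S n = ⋃ (m : ℕ), ⋃ (_ : n ≤ m), ⋃ (y : Fin d → ℤ),
        {b | (BZZaux.walk b)^[m] y = 0} := by
      ext b
      simp only [hS, Set.mem_setOf_eq, Set.mem_iUnion,
        BZZaux.sup_ge_iff n hn (fun m => ∃ y, (BZZaux.walk b)^[m] y = 0)]
      tauto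
    rw [this]
    exact MeasurableSet.iUnion fun m => MeasurableSet.iUnion fun _ =>
      MeasurableSet.iUnion fun y => BZZaux.meas_walk_set m y 0
  have hpre : ∀ (z : Fin d → ℤ) (n : ℕ), (F z) ⁻¹' (S n) = E z n := by
    intro z n
    ext ω
    have hmeq : ∀ m : ℕ,
        (∃ y, (BZZaux.walk (F z ω))^[m] y = 0) = (∃ y, (a ω)^[m] y = z) := by
      intro m
      refine propext ⟨?_, ?_⟩
      · rintro ⟨y, hy⟩
        rw [hF] at hy
        rw [BZZaux.walk_shift (a ω) z m y, sub_eq_zero] at hy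
        exact ⟨y + z, hy⟩
      · rintro ⟨y, hy⟩
        refine ⟨y - z, ?_⟩
        rw [hF, BZZaux.walk_shift (a ω) z m (y - z), sub_add_cancel, hy, sub_self]
    simp only [Set.mem_preimage, hS, hE, Set.mem_setOf_eq, hmeq]
  have hF0 : F 0 = fun ω => fun x => a ω x - x := by
    funext ω u; simp [hF]
  have hEmeas : ∀ (z : Fin d → ℤ) (n : ℕ), 1 ≤ n → MeasurableSet (E z n) := by
    intro z n hn
    rw [← hpre z n]
    exact (hstat z).1 (hSmeas n hn)
  have hEeq : ∀ (z : Fin d → ℤ) (n : ℕ), 1 ≤ n → ℙ (E z n) = ℙ (E 0 n) := by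
    intro z n hn
    rw [← hpre z n, ← hpre 0 n, ← Measure.map_apply (hstat z).1 (hSmeas n hn),
      ← Measure.map_apply (hstat 0).1 (hSmeas n hn)]
    rw [(hstat z).2, (hstat 0).2]
  -- the main pointwise bound
  have main : ∀ n : ℕ, 1 ≤ n →
      ((5 : ℝ≥0∞) ^ d)⁻¹ ≤ (n : ℝ≥0∞) ^ (d - 1) * ℙ (E 0 n) := by
    intro n hn
    set Box : Finset (Fin d → ℤ) :=
      Fintype.piFinset fun _ : Fin d => Finset.Icc (-(2 * n : ℤ)) (2 * n) with hBox
    have hBoxcard : Box.card = (4 * n + 1) ^ d := by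
      rw [hBox, Fintype.card_piFinset]
      have : (Finset.Icc (-(2 * n : ℤ)) (2 * n)).card = 4 * n + 1 := by
        rw [Int.card_Icc]
        have : (2 * n : ℤ) + 1 - -(2 * n : ℤ) = ((4 * n + 1 : ℕ) : ℤ) := by
          push_cast; ring
        rw [this, Int.toNat_natCast]
      simp [this]
    -- trajectory points
    have key : ∀ ω : Ω, ∃ T : Finset (Fin d → ℤ),
        T.card = n + 1 ∧ T ⊆ Box ∧ ∀ x ∈ T, ω ∈ E x n := by
      intro ω
      refine ⟨(Finset.range (n + 1)).image fun k => (a ω)^[n + k] 0, ?_, ?_, ?_⟩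
      · rw [Finset.card_image_of_injOn, Finset.card_range]
        intro j hj k hk hjk
        by_contra hne
        have hjk' : (a ω)^[n + j] 0 = (a ω)^[n + k] 0 := hjk
        rcases lt_trichotomy j k with h | h | h
        · have h2 : (a ω)^[n + k] 0 = (a ω)^[k - j] ((a ω)^[n + j] 0) := by
            rw [← Function.iterate_add_apply]; congr 1; omega
          exact hcyc ω _ (k - j) (by omega) (h2.symm.trans hjk'.symm)
        · exact hne h
        · have h2 : (a ω)^[n + j] 0 = (a ω)^[j - k] ((a ω)^[n + k] 0) := by
            rw [← Function.iterate_add_apply]; congr 1; omega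
          exact hcyc ω _ (j - k) (by omega) (h2.symm.trans hjk')
      · intro x hx
        simp only [Finset.mem_image, Finset.mem_range] at hx
        obtain ⟨k, hk, rfl⟩ := hx
        rw [hBox, Fintype.mem_piFinset]
        intro i
        have hsum := BZZaux.l1_bound (a ω) (h1 ω) (n + k) 0
        have habs : |(a ω)^[n + k] 0 i - (0 : Fin d → ℤ) i| ≤ ((n + k : ℕ) : ℤ) := by
          refine le_trans ?_ hsum
          exact Finset.single_le_sum
            (f := fun j => |(a ω)^[n + k] 0 j - (0 : Fin d → ℤ) j|)
            (fun j _ => abs_nonneg _) (Finset.mem_univ i)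
        simp only [Pi.zero_apply, sub_zero] at habs
        rw [Finset.mem_Icc]
        have : ((n + k : ℕ) : ℤ) ≤ 2 * n := by push_cast; omega
        have := habs.trans this
        constructor
        · linarith [neg_abs_le ((a ω)^[n + k] 0 i)]
        · linarith [le_abs_self ((a ω)^[n + k] 0 i)]
      · intro x hx
        simp only [Finset.mem_image, Finset.mem_range] at hx
        obtain ⟨k, hk, rfl⟩ := hx
        show (n : ℕ∞) ≤ ⨆ (m : ℕ) (_ : ∃ y, (a ω)^[m] y = (a ω)^[n + k] 0), (m : ℕ∞)
        refine le_trans ?_ (le_iSup₂ (f := fun m (_ : ∃ y, (a ω)^[m] y = (a ω)^[n + k] 0)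
          => (m : ℕ∞)) (n + k) ⟨0, rfl⟩)
        exact_mod_cast Nat.le_add_right n k
    -- sum of probabilities over box
    have hsum : ((n : ℝ≥0∞) + 1) ≤ ∑ x ∈ Box, ℙ (E x n) := by
      have h1' : ((n : ℝ≥0∞) + 1) = ∫⁻ _, ((n : ℝ≥0∞) + 1) ∂ℙ := by
        simp
      rw [h1']
      have h2' : ∀ x ∈ Box, Measurable ((E x n).indicator fun _ => (1 : ℝ≥0∞)) :=
        fun x _ => measurable_const.indicator (hEmeas x n hn)
      calc ∫⁻ _, ((n : ℝ≥0∞) + 1) ∂ℙ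
          ≤ ∫⁻ ω, ∑ x ∈ Box, (E x n).indicator (fun _ => (1 : ℝ≥0∞)) ω ∂ℙ := by
            refine lintegral_mono fun ω => ?_
            obtain ⟨T, hTcard, hTsub, hTE⟩ := key ω
            calc ((n : ℝ≥0∞) + 1) = ∑ _x ∈ T, (1 : ℝ≥0∞) := by
                  rw [Finset.sum_const, hTcard]; simp [mul_comm]
              _ = ∑ x ∈ T, (E x n).indicator (fun _ => (1 : ℝ≥0∞)) ω := by
                  refine Finset.sum_congr rfl fun x hx => ?_
                  rw [Set.indicator_of_mem (hTE x hx)]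
              _ ≤ ∑ x ∈ Box, (E x n).indicator (fun _ => (1 : ℝ≥0∞)) ω :=
                  Finset.sum_le_sum_of_subset hTsub
        _ = ∑ x ∈ Box, ∫⁻ ω, (E x n).indicator (fun _ => (1 : ℝ≥0∞)) ω ∂ℙ :=
            lintegral_finset_sum Box h2'
        _ = ∑ x ∈ Box, ℙ (E x n) := by
            refine Finset.sum_congr rfl fun x _ => ?_
            rw [lintegral_indicator_const (hEmeas x n hn), one_mul]
    have hsum2 : ((n : ℝ≥0∞) + 1) ≤ ((4 * n + 1 : ℕ) : ℝ≥0∞) ^ d * ℙ (E 0 n) := by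
      refine hsum.trans (le_of_eq ?_)
      calc ∑ x ∈ Box, ℙ (E x n) = ∑ _x ∈ Box, ℙ (E 0 n) :=
            Finset.sum_congr rfl fun x _ => hEeq x n hn
        _ = (Box.card : ℝ≥0∞) * ℙ (E 0 n) := by
            rw [Finset.sum_const, nsmul_eq_mul]
        _ = ((4 * n + 1 : ℕ) : ℝ≥0∞) ^ d * ℙ (E 0 n) := by
            rw [hBoxcard]; push_cast; ring
    -- arithmetic
    set p := ℙ (E 0 n) with hp
    have h5 : ((4 * n + 1 : ℕ) : ℝ≥0∞) ^ d ≤ 5 ^ d * (n : ℝ≥0∞) ^ d := by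
      rw [← mul_pow]
      refine pow_le_pow_left₀ (by positivity) ?_ d
      have : (4 * n + 1 : ℕ) ≤ 5 * n := by omega
      calc ((4 * n + 1 : ℕ) : ℝ≥0∞) ≤ ((5 * n : ℕ) : ℝ≥0∞) := by exact_mod_cast this
        _ = 5 * (n : ℝ≥0∞) := by push_cast; ring
    have hle : (n : ℝ≥0∞) ≤ 5 ^ d * ((n : ℝ≥0∞) ^ (d - 1) * p) * n := by
      have hnd : (n : ℝ≥0∞) ^ d = (n : ℝ≥0∞) ^ (d - 1) * n := by
        rw [← pow_succ]; congr 1; omega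
      calc (n : ℝ≥0∞) ≤ (n : ℝ≥0∞) + 1 := le_self_add
        _ ≤ ((4 * n + 1 : ℕ) : ℝ≥0∞) ^ d * p := hsum2
        _ ≤ 5 ^ d * (n : ℝ≥0∞) ^ d * p := mul_le_mul_left h5 p
        _ = 5 ^ d * ((n : ℝ≥0∞) ^ (d - 1) * p) * n := by rw [hnd]; ring
    have hn0 : (n : ℝ≥0∞) ≠ 0 := by exact_mod_cast Nat.one_le_iff_ne_zero.mp hn
    have hnt : (n : ℝ≥0∞) ≠ ⊤ := ENNReal.natCast_ne_top n
    have h1le : (1 : ℝ≥0∞) ≤ 5 ^ d * ((n : ℝ≥0∞) ^ (d - 1) * p) := by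
      have h' : 1 * (n : ℝ≥0∞) ≤ (5 ^ d * ((n : ℝ≥0∞) ^ (d - 1) * p)) * n := by
        simpa using hle
      exact (ENNReal.mul_le_mul_iff_left hn0 hnt).mp h'
    calc ((5 : ℝ≥0∞) ^ d)⁻¹ = ((5 : ℝ≥0∞) ^ d)⁻¹ * 1 := (mul_one _).symm
      _ ≤ ((5 : ℝ≥0∞) ^ d)⁻¹ * (5 ^ d * ((n : ℝ≥0∞) ^ (d - 1) * p)) :=
          mul_le_mul_right h1le _
      _ = (n : ℝ≥0∞) ^ (d - 1) * p := by
          rw [← mul_assoc, ENNReal.inv_mul_cancel (by positivity)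
            (by exact ENNReal.pow_ne_top (by norm_num)), one_mul]
  -- take liminf
  calc ((5 : ℝ≥0∞) ^ d)⁻¹ = liminf (fun _ : ℕ => ((5 : ℝ≥0∞) ^ d)⁻¹) atTop :=
        (liminf_const _).symm
    _ ≤ liminf (fun n : ℕ => (n : ℝ≥0∞) ^ (d - 1) *
          ℙ {ω | (n : ℕ∞) ≤ ⨆ (m : ℕ) (_ : ∃ y, (a ω)^[m] y = 0), (m : ℕ∞)}) atTop := by
        refine liminf_le_liminf ?_
        filter_upwards [eventually_ge_atTop 1] with n hn
        exact main n hn
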